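/- For every integer k ≥ 3 and every natural number N, there exists a strongly minimal asymmetric k-uniform hypergraph (X, M) with more than N vertices in which every vertex has degree at most 3 (i.e., every vertex belongs to at most 3 edges of M). -/

import Mathlib

/-- An automorphism of a hypergraph `(X, M)`: a permutation of the ambient type that
fixes every vertex outside `X` (so it is essentially a permutation of `X`) and
preserves the edge set `M`. -/
def IsAuto {V : Type*} [DecidableEq V] (X : Finset V) (M : Finset (Finset V))
    (σ : Equiv.Perm V) : Prop :=
  (∀ v ∉ X, σ v = v) ∧ ∀ E : Finset V, E ∈ M ↔ E.image σ ∈ M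

open Finset

namespace SMA


/-! ### Definitions -/

def pairF (x : ℕ) : Finset ℕ := {x, x+1}
def consecF (a : ℕ) : Finset ℕ := {a, a+1, a+2}
def triF (m d i : ℕ) : Finset ℕ := {i, (i+d) % m, (i+2*d) % m}
def SS (m : ℕ) : Finset (Finset ℕ) := ((range m).erase 1).image (fun x => {x})
def CC (m : ℕ) : Finset (Finset ℕ) := (range (m-1)).image pairF
def tauF (m : ℕ) : Finset ℕ := {0, 1, m-1}
def centralF (m : ℕ) : Finset ℕ := {0, 4, m-4}
def runF (m : ℕ) : Finset ℕ :=
  insert 1 (insert (m-3) ((Finset.Icc 5 (m-7)).filter (fun a => a % 3 = 2)))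
def P1 (m : ℕ) : Finset (Finset ℕ) := insert (centralF m) ((runF m).image consecF)
def FmodF (m : ℕ) : Finset (Finset ℕ) :=
  ((range m).filter (fun i => i % 3 ≠ 2)).image (triF m 13)
def FdF (m d : ℕ) : Finset (Finset ℕ) := (range m).image (triF m d)
def FF (m B : ℕ) : Finset (Finset ℕ) := (Finset.Ico 14 (14+B)).biUnion (FdF m)
def LL (k m : ℕ) : Finset (Finset ℕ) :=
  SS m ∪ CC m ∪ {tauF m} ∪ (if (k-3) % 3 = 1 then P1 m else ∅) ∪
    (if (k-3) % 3 = 2 then FmodF m else ∅) ∪ FF m ((k-3)/3)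

def negmF (m x : ℕ) : ℕ := if x = 0 ∨ m ≤ x then x else m - x

/-! ### mod helpers -/

lemma addMod_cancel {m i s t : ℕ} (hs : s < m) (ht : t < m)
    (h : (i + s) % m = (i + t) % m) : s = t := by
  have h1 : (i + s) % m ≡ (i + t) % m [MOD m] := by rw [h]
  have h2 : i + s ≡ i + t [MOD m] :=
    (Nat.mod_modEq _ _).symm.trans (h1.trans (Nat.mod_modEq _ _))
  have h3 : s ≡ t [MOD m] := Nat.ModEq.add_left_cancel' i h2
  have := h3.eq_of_lt_of_lt hs ht
  exact this

lemma self_ne_addMod {m i t : ℕ} (hi : i < m) (ht0 : 0 < t) (ht : t < m) :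
    i ≠ (i + t) % m := by
  intro h
  have h2 : (i + 0) % m = (i + t) % m := by
    rw [Nat.add_zero, Nat.mod_eq_of_lt hi]; exact h
  have := addMod_cancel (by omega) ht h2
  omega

lemma shift_inv {m i j t s : ℕ} (hi : i < m) (hj : j < m) (q : ℕ)
    (hts : t + s = m * q) : j = (i + t) % m ↔ i = (j + s) % m := by
  constructor
  · rintro rfl
    rw [Nat.mod_add_mod, Nat.add_assoc, hts, Nat.add_mul_mod_self_left,
      Nat.mod_eq_of_lt hi]
  · rintro rfl
    rw [Nat.mod_add_mod, Nat.add_assoc, Nat.add_comm s t, hts,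
      Nat.add_mul_mod_self_left, Nat.mod_eq_of_lt hj]

lemma mod3_mod {m x : ℕ} (hm3 : m % 3 = 0) : (x % m) % 3 = x % 3 := by
  obtain ⟨t, ht⟩ := Nat.dvd_of_mod_eq_zero hm3
  conv_rhs => rw [← Nat.mod_add_div x m]
  rw [ht]
  rw [show x % (3*t) + 3 * t * (x / (3*t)) = x % (3*t) + (t * (x / (3*t))) * 3 by ring]
  rw [Nat.add_mul_mod_self_right]

lemma negm_invol (m : ℕ) : Function.Involutive (negmF m) := by
  intro x
  unfold negmF
  split_ifs with h1 h2 h3 <;> omega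

lemma negm_lt {m x : ℕ} (hm : 0 < m) (hx : x < m) : negmF m x < m := by
  unfold negmF; split_ifs <;> omega

lemma negm_mod {m : ℕ} (hm : 0 < m) {s : ℕ} (hs : s ≤ 2*m) :
    negmF m (s % m) = (3*m - s) % m := by
  rcases Nat.lt_or_ge s m with h | h
  · rw [Nat.mod_eq_of_lt h]
    by_cases h0 : s = 0
    · subst h0
      have h1 : negmF m 0 = 0 := by unfold negmF; simp
      have h2 : 3*m - 0 = 0 + m*3 := by omega
      rw [h1, h2, Nat.add_mul_mod_self_left]
      simp
    · have h1 : negmF m s = m - s := by unfold negmF; split_ifs <;> omega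
      rw [h1, show 3*m - s = (m - s) + m*2 by omega, Nat.add_mul_mod_self_left,
        Nat.mod_eq_of_lt (by omega)]
  · rcases Nat.lt_or_ge s (2*m) with h2 | h2
    · have hz : s % m = s - m := by
        rw [Nat.mod_eq_sub_mod h, Nat.mod_eq_of_lt (by omega)]
      rw [hz]
      by_cases h0 : s = m
      · have hz0 : s - m = 0 := by omega
        rw [hz0]
        have h1 : negmF m 0 = 0 := by unfold negmF; simp
        rw [h1, show 3*m - s = 0 + m*2 by omega, Nat.add_mul_mod_self_left]
        simp
      · have h1 : negmF m (s - m) = m - (s - m) := by unfold negmF; split_ifs <;> omega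
        rw [h1, show 3*m - s = (m - (s-m)) + m*1 by omega, Nat.add_mul_mod_self_left,
          Nat.mod_eq_of_lt (by omega)]
    · have h3 : s = 2*m := by omega
      subst h3
      have h1 : (2*m) % m = 0 := by
        rw [show 2*m = 0 + m*2 by omega, Nat.add_mul_mod_self_left]; simp
      rw [h1, show 3*m - 2*m = 0 + m*1 by omega, Nat.add_mul_mod_self_left]
      have h4 : negmF m 0 = 0 := by unfold negmF; simp
      rw [h4]
      simp

/-! ### triF basics -/

lemma mem_triF {m d i x : ℕ} :
    x ∈ triF m d i ↔ x = i ∨ x = (i+d) % m ∨ x = (i+2*d) % m := by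
  simp [triF]

lemma triF_subset {m d i : ℕ} (hi : i < m) : triF m d i ⊆ range m := by
  have hm : 0 < m := by omega
  intro x hx
  rw [mem_triF] at hx
  rcases hx with rfl | rfl | rfl
  · exact mem_range.2 hi
  · exact mem_range.2 (Nat.mod_lt _ hm)
  · exact mem_range.2 (Nat.mod_lt _ hm)

lemma triF_card {m d i : ℕ} (hi : i < m) (hd : 0 < d) (h2 : 2*d < m) :
    (triF m d i).card = 3 := by
  have h01 : i ≠ (i+d) % m := self_ne_addMod hi hd (by omega)
  have h02 : i ≠ (i+2*d) % m := self_ne_addMod hi (by omega) h2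
  have h12 : (i+d) % m ≠ (i+2*d) % m := by
    intro h; have := addMod_cancel (by omega) h2 h; omega
  rw [triF, card_insert_of_notMem (by simp [h01, h02]),
    card_insert_of_notMem (by simp [h12]), card_singleton]

lemma triF_cover {m d j : ℕ} (hj : j < m) (hd : 0 < d) (h2 : 2*d < m) :
    (range m).filter (fun i => j ∈ triF m d i) =
      {j, (j + (m - d)) % m, (j + (m - 2*d)) % m} := by
  have hm : 0 < m := by omega
  ext i
  simp only [mem_filter, mem_range, mem_triF, mem_insert, mem_singleton]
  constructor
  · rintro ⟨him, h | h | h⟩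
    · left; omega
    · right; left; exact (shift_inv him hj 1 (by omega)).1 h
    · right; right; exact (shift_inv him hj 1 (by omega)).1 h
  · rintro (rfl | rfl | rfl)
    · exact ⟨hj, Or.inl rfl⟩
    · refine ⟨Nat.mod_lt _ hm, Or.inr (Or.inl ?_)⟩
      exact (shift_inv (Nat.mod_lt _ hm) hj 1 (by omega)).2 rfl
    · refine ⟨Nat.mod_lt _ hm, Or.inr (Or.inr ?_)⟩
      exact (shift_inv (Nat.mod_lt _ hm) hj 1 (by omega)).2 rfl

lemma triF_cover_card {m d j : ℕ} (hj : j < m) (hd : 0 < d) (h2 : 2*d < m) :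
    ((range m).filter (fun i => j ∈ triF m d i)).card = 3 := by
  rw [triF_cover hj hd h2]
  have h01 : j ≠ (j + (m - d)) % m := self_ne_addMod hj (by omega) (by omega)
  have h02 : j ≠ (j + (m - 2*d)) % m := self_ne_addMod hj (by omega) (by omega)
  have h12 : (j + (m - d)) % m ≠ (j + (m - 2*d)) % m := by
    intro h
    have := addMod_cancel (show m - d < m by omega) (show m - 2*d < m by omega) h
    omega
  rw [card_insert_of_notMem (by simp [h01, h02]),
    card_insert_of_notMem (by simp [h12]), card_singleton]

lemma triF_gap {m d i x e : ℕ} (hi : i < m) (hd : 0 < d) (h6 : 6*d < m)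
    (he : 0 < e) (he2 : e + 2*d < m)
    (hx : x ∈ triF m d i) (hy : (x + e) % m ∈ triF m d i) : e = d ∨ e = 2*d := by
  rw [mem_triF] at hx hy
  rcases hx with rfl | rfl | rfl
  · rcases hy with h | h | h
    · exact absurd h.symm (self_ne_addMod hi he (by omega))
    · left; exact addMod_cancel (by omega) (by omega) h
    · right; exact addMod_cancel (by omega) (by omega) h
  · rw [Nat.mod_add_mod, Nat.add_assoc] at hy
    rcases hy with h | h | h
    · exact absurd h.symm (self_ne_addMod hi (by omega) (by omega))
    · have := addMod_cancel (by omega) (by omega) h; omega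
    · have := addMod_cancel (by omega) (by omega) h; omega
  · rw [Nat.mod_add_mod, Nat.add_assoc] at hy
    rcases hy with h | h | h
    · exact absurd h.symm (self_ne_addMod hi (by omega) (by omega))
    · have := addMod_cancel (by omega) (by omega) h; omega
    · have := addMod_cancel (by omega) (by omega) h; omega

lemma triF_inj {m d i i' : ℕ} (hi : i < m) (hi' : i' < m) (hd : 0 < d)
    (h6 : 6*d < m) (h : triF m d i = triF m d i') : i = i' := by
  have hmem : i' ∈ triF m d i := by
    have h2 : i' ∈ triF m d i' := by simp [triF]
    rwa [← h] at h2
  rw [mem_triF] at hmem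
  rcases hmem with h1 | h1 | h1
  · exact h1.symm
  · exfalso
    have hy : (i' + 2*d) % m ∈ triF m d i := by
      rw [h, mem_triF]; right; right; rfl
    subst h1
    rw [Nat.mod_add_mod, Nat.add_assoc, mem_triF] at hy
    rcases hy with h2 | h2 | h2
    · exact absurd h2.symm (self_ne_addMod hi (by omega) (by omega))
    · have := addMod_cancel (by omega) (by omega) h2; omega
    · have := addMod_cancel (by omega) (by omega) h2; omega
  · exfalso
    have hy : (i' + d) % m ∈ triF m d i := by
      rw [h, mem_triF]; right; left; rfl
    subst h1
    rw [Nat.mod_add_mod, Nat.add_assoc, mem_triF] at hy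
    rcases hy with h2 | h2 | h2
    · exact absurd h2.symm (self_ne_addMod hi (by omega) (by omega))
    · have := addMod_cancel (by omega) (by omega) h2; omega
    · have := addMod_cancel (by omega) (by omega) h2; omega



/-! ### membership characterizations -/

lemma mem_SS {m : ℕ} {L : Finset ℕ} : L ∈ SS m ↔ ∃ x, x < m ∧ x ≠ 1 ∧ L = {x} := by
  simp only [SS, mem_image, mem_erase, mem_range]
  constructor
  · rintro ⟨x, ⟨h1, h2⟩, rfl⟩; exact ⟨x, h2, h1, rfl⟩
  · rintro ⟨x, h1, h2, rfl⟩; exact ⟨x, ⟨h2, h1⟩, rfl⟩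

lemma mem_CC {m : ℕ} {L : Finset ℕ} : L ∈ CC m ↔ ∃ x, x + 1 < m ∧ L = pairF x := by
  simp only [CC, mem_image, mem_range]
  constructor
  · rintro ⟨x, h1, rfl⟩; exact ⟨x, by omega, rfl⟩
  · rintro ⟨x, h1, rfl⟩; exact ⟨x, by omega, rfl⟩

lemma mem_runF {m a : ℕ} (hm : 30 ≤ m) :
    a ∈ runF m ↔ a = 1 ∨ a = m-3 ∨ (5 ≤ a ∧ a ≤ m-7 ∧ a % 3 = 2) := by
  simp only [runF, mem_insert, mem_filter, Finset.mem_Icc]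
  constructor
  · rintro (rfl | rfl | ⟨⟨h1, h2⟩, h3⟩)
    · left; rfl
    · right; left; rfl
    · right; right; exact ⟨h1, h2, h3⟩
  · rintro (rfl | rfl | ⟨h1, h2, h3⟩)
    · left; rfl
    · right; left; rfl
    · right; right; exact ⟨⟨h1, h2⟩, h3⟩

lemma mem_P1 {m : ℕ} {L : Finset ℕ} :
    L ∈ P1 m ↔ L = centralF m ∨ ∃ a ∈ runF m, L = consecF a := by
  simp only [P1, mem_insert, mem_image]
  constructor
  · rintro (rfl | ⟨a, ha, rfl⟩)
    · left; rfl
    · right; exact ⟨a, ha, rfl⟩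
  · rintro (rfl | ⟨a, ha, rfl⟩)
    · left; rfl
    · right; exact ⟨a, ha, rfl⟩

lemma mem_FmodF {m : ℕ} {L : Finset ℕ} :
    L ∈ FmodF m ↔ ∃ i, i < m ∧ i % 3 ≠ 2 ∧ L = triF m 13 i := by
  simp only [FmodF, mem_image, mem_filter, mem_range]
  constructor
  · rintro ⟨i, ⟨h1, h2⟩, rfl⟩; exact ⟨i, h1, h2, rfl⟩
  · rintro ⟨i, h1, h2, rfl⟩; exact ⟨i, ⟨h1, h2⟩, rfl⟩

lemma mem_FdF {m d : ℕ} {L : Finset ℕ} :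
    L ∈ FdF m d ↔ ∃ i, i < m ∧ L = triF m d i := by
  simp only [FdF, mem_image, mem_range]
  constructor
  · rintro ⟨i, h1, rfl⟩; exact ⟨i, h1, rfl⟩
  · rintro ⟨i, h1, rfl⟩; exact ⟨i, h1, rfl⟩

lemma mem_FF {m B : ℕ} {L : Finset ℕ} :
    L ∈ FF m B ↔ ∃ d, 14 ≤ d ∧ d < 14 + B ∧ ∃ i, i < m ∧ L = triF m d i := by
  simp only [FF, mem_biUnion, Finset.mem_Ico]
  constructor
  · rintro ⟨d, ⟨h1, h2⟩, hL⟩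
    exact ⟨d, h1, h2, mem_FdF.1 hL⟩
  · rintro ⟨d, h1, h2, hL⟩
    exact ⟨d, ⟨h1, h2⟩, mem_FdF.2 hL⟩

set_option maxHeartbeats 2000000 in
lemma mem_LL {k m : ℕ} {L : Finset ℕ} :
    L ∈ LL k m ↔ L ∈ SS m ∨ L ∈ CC m ∨ L = tauF m ∨
      ((k-3) % 3 = 1 ∧ L ∈ P1 m) ∨ ((k-3) % 3 = 2 ∧ L ∈ FmodF m) ∨
      L ∈ FF m ((k-3)/3) := by
  by_cases hr1 : (k-3) % 3 = 1
  · have hr2 : ¬ (k-3) % 3 = 2 := by omega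
    rw [LL, if_pos hr1, if_neg hr2, union_empty]
    simp only [mem_union, mem_singleton, hr1, hr2, true_and, false_and, false_or, or_false]
    tauto
  · by_cases hr2 : (k-3) % 3 = 2
    · rw [LL, if_neg hr1, if_pos hr2, union_empty]
      simp only [mem_union, mem_singleton, hr1, hr2, true_and, false_and, false_or, or_false]
      tauto
    · rw [LL, if_neg hr1, if_neg hr2, union_empty, union_empty]
      simp only [mem_union, mem_singleton, hr1, hr2, false_and, false_or, or_false]
      tauto

/-! ### cards -/

lemma card_pairF (x : ℕ) : (pairF x).card = 2 := by
  rw [pairF, card_insert_of_notMem (by simp), card_singleton]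

lemma card_consecF (a : ℕ) : (consecF a).card = 3 := by
  rw [consecF, card_insert_of_notMem (by simp only [mem_insert, mem_singleton]; omega),
    card_insert_of_notMem (by simp only [mem_singleton]; omega), card_singleton]

lemma card_tauF {m : ℕ} (hm : 30 ≤ m) : (tauF m).card = 3 := by
  rw [tauF, card_insert_of_notMem (by simp only [mem_insert, mem_singleton]; omega),
    card_insert_of_notMem (by simp only [mem_singleton]; omega), card_singleton]

lemma card_centralF {m : ℕ} (hm : 30 ≤ m) : (centralF m).card = 3 := by
  rw [centralF, card_insert_of_notMem (by simp only [mem_insert, mem_singleton]; omega),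
    card_insert_of_notMem (by simp only [mem_singleton]; omega), card_singleton]

/-! ### injectivity of constructors -/

lemma pairF_inj : Function.Injective pairF := by
  intro a b h
  have h1 : a ∈ pairF b := by rw [← h]; simp [pairF]
  have h2 : b ∈ pairF a := by rw [h]; simp [pairF]
  simp [pairF] at h1 h2
  omega

lemma consecF_inj : Function.Injective consecF := by
  intro a b h
  have h1 : a ∈ consecF b := by rw [← h]; simp [consecF]
  have h2 : b ∈ consecF a := by rw [h]; simp [consecF]
  simp [consecF] at h1 h2
  omega

lemma singletonF_inj : Function.Injective (fun x : ℕ => ({x} : Finset ℕ)) := by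
  intro a b h
  simpa using h

/-! ### distinctness between families -/

lemma triF_ne_tauF {m d i : ℕ} (hi : i < m) (hd : 13 ≤ d) (h6 : 6*d < m) :
    triF m d i ≠ tauF m := by
  intro h
  have h0 : (0:ℕ) ∈ triF m d i := by rw [h]; simp [tauF]
  have h1 : (0 + 1) % m ∈ triF m d i := by
    rw [Nat.mod_eq_of_lt (by omega), h]; simp [tauF]
  have := triF_gap hi (by omega) h6 (by omega) (by omega) h0 h1
  omega

lemma triF_ne_centralF {m d i : ℕ} (hi : i < m) (hd : 13 ≤ d) (h6 : 6*d < m) :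
    triF m d i ≠ centralF m := by
  intro h
  have h0 : (0:ℕ) ∈ triF m d i := by rw [h]; simp [centralF]
  have h1 : (0 + 4) % m ∈ triF m d i := by
    rw [Nat.mod_eq_of_lt (by omega), h]; simp [centralF]
  have := triF_gap hi (by omega) h6 (by omega) (by omega) h0 h1
  omega

lemma triF_ne_consecF {m d i a : ℕ} (hi : i < m) (ha : a + 1 < m)
    (hd : 13 ≤ d) (h6 : 6*d < m) : triF m d i ≠ consecF a := by
  intro h
  have h0 : a ∈ triF m d i := by rw [h]; simp [consecF]
  have h1 : (a + 1) % m ∈ triF m d i := by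
    rw [Nat.mod_eq_of_lt ha, h]; simp [consecF]
  have := triF_gap hi (by omega) h6 (by omega) (by omega) h0 h1
  omega

lemma triF_ne_triF {m d e i i' : ℕ} (hi : i < m) (hi' : i' < m) (hd : 0 < d)
    (hde : d < e) (h6 : 6*e < m) : triF m d i ≠ triF m e i' := by
  intro h
  have h1 : i' ∈ triF m d i := by rw [h]; simp [triF]
  have h2 : (i' + e) % m ∈ triF m d i := by rw [h, mem_triF]; right; left; rfl
  rcases triF_gap hi hd (by omega) (by omega) (by omega) h1 h2 with h5 | h5
  · omega
  · have h3 : i ∈ triF m e i' := by rw [← h]; simp [triF]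
    have h4 : (i + d) % m ∈ triF m e i' := by rw [← h, mem_triF]; right; left; rfl
    rcases triF_gap hi' (by omega) h6 (by omega) (by omega) h3 h4 with h7 | h7
    · omega
    · omega

lemma tauF_ne_centralF {m : ℕ} (hm : 30 ≤ m) : tauF m ≠ centralF m := by
  intro h
  have h1 : (1:ℕ) ∈ centralF m := by rw [← h]; simp [tauF]
  simp [centralF] at h1
  omega

lemma tauF_ne_consecF {m a : ℕ} (hm : 30 ≤ m) (ha : 1 ≤ a) : tauF m ≠ consecF a := by
  intro h
  have h1 : (0:ℕ) ∈ consecF a := by rw [← h]; simp [tauF]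
  simp [consecF] at h1
  omega

lemma centralF_ne_consecF {m a : ℕ} (hm : 30 ≤ m) (ha : 1 ≤ a) :
    centralF m ≠ consecF a := by
  intro h
  have h1 : (0:ℕ) ∈ consecF a := by rw [← h]; simp [centralF]
  simp [consecF] at h1
  omega

/-! ### cards of members -/

lemma card_of_mem_SS {m : ℕ} {L : Finset ℕ} (h : L ∈ SS m) : L.card = 1 := by
  obtain ⟨x, -, -, rfl⟩ := mem_SS.1 h
  exact card_singleton x

lemma card_of_mem_CC {m : ℕ} {L : Finset ℕ} (h : L ∈ CC m) : L.card = 2 := by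
  obtain ⟨x, -, rfl⟩ := mem_CC.1 h
  exact card_pairF x

lemma card_of_mem_P1 {m : ℕ} (hm : 30 ≤ m) {L : Finset ℕ} (h : L ∈ P1 m) :
    L.card = 3 := by
  rcases mem_P1.1 h with rfl | ⟨a, -, rfl⟩
  · exact card_centralF hm
  · exact card_consecF a

lemma card_of_mem_FmodF {m : ℕ} (hm : 200 ≤ m) {L : Finset ℕ} (h : L ∈ FmodF m) :
    L.card = 3 := by
  obtain ⟨i, hi, -, rfl⟩ := mem_FmodF.1 h
  exact triF_card hi (by omega) (by omega)

lemma card_of_mem_FF {m B : ℕ} (hB : 6*(14+B) < m) {L : Finset ℕ} (h : L ∈ FF m B) :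
    L.card = 3 := by
  obtain ⟨d, hd1, hd2, i, hi, rfl⟩ := mem_FF.1 h
  exact triF_card hi (by omega) (by omega)

/-! ### disjointness of families -/

lemma disj_of_card {s t : Finset (Finset ℕ)} {a b : ℕ}
    (hs : ∀ L ∈ s, L.card = a) (ht : ∀ L ∈ t, L.card = b) (hab : a ≠ b) :
    Disjoint s t := by
  rw [disjoint_left]
  intro L hLs hLt
  exact hab ((hs L hLs).symm.trans (ht L hLt))

lemma run_pos {m a : ℕ} (hm : 30 ≤ m) (h : a ∈ runF m) : 1 ≤ a ∧ a + 2 < m := by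
  rw [mem_runF hm] at h
  omega

lemma tau_notin_P1 {m : ℕ} (hm : 30 ≤ m) : tauF m ∉ P1 m := by
  intro h
  rcases mem_P1.1 h with h1 | ⟨a, ha, h1⟩
  · exact tauF_ne_centralF hm h1
  · exact tauF_ne_consecF hm (run_pos hm ha).1 h1

lemma tau_notin_FmodF {m : ℕ} (hm : 200 ≤ m) : tauF m ∉ FmodF m := by
  intro h
  obtain ⟨i, hi, -, h1⟩ := mem_FmodF.1 h
  exact triF_ne_tauF hi (by omega) (by omega) h1.symm

lemma tau_notin_FF {m B : ℕ} (hB : 6*(14+B) < m) : tauF m ∉ FF m B := by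
  intro h
  obtain ⟨d, hd1, hd2, i, hi, h1⟩ := mem_FF.1 h
  exact triF_ne_tauF hi (by omega) (by omega) h1.symm

lemma disj_P1_FmodF {m : ℕ} (hm : 200 ≤ m) : Disjoint (P1 m) (FmodF m) := by
  rw [disjoint_left]
  intro L hL1 hL2
  obtain ⟨i, hi, -, rfl⟩ := mem_FmodF.1 hL2
  rcases mem_P1.1 hL1 with h1 | ⟨a, ha, h1⟩
  · exact triF_ne_centralF hi (by omega) (by omega) h1
  · have hrp := run_pos (by omega : 30 ≤ m) ha
    exact triF_ne_consecF hi (by omega) (by omega) (by omega) h1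

lemma disj_P1_FF {m B : ℕ} (hm : 200 ≤ m) (hB : 6*(14+B) < m) :
    Disjoint (P1 m) (FF m B) := by
  rw [disjoint_left]
  intro L hL1 hL2
  obtain ⟨d, hd1, hd2, i, hi, rfl⟩ := mem_FF.1 hL2
  rcases mem_P1.1 hL1 with h1 | ⟨a, ha, h1⟩
  · exact triF_ne_centralF hi (by omega) (by omega) h1
  · have hrp := run_pos (by omega : 30 ≤ m) ha
    exact triF_ne_consecF hi (by omega) (by omega) (by omega) h1

lemma disj_FmodF_FF {m B : ℕ} (hm : 200 ≤ m) (hB : 6*(14+B) < m) :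
    Disjoint (FmodF m) (FF m B) := by
  rw [disjoint_left]
  intro L hL1 hL2
  obtain ⟨i, hi, -, rfl⟩ := mem_FmodF.1 hL1
  obtain ⟨d, hd1, hd2, i', hi', h1⟩ := mem_FF.1 hL2
  exact triF_ne_triF hi hi' (by omega) (by omega) (by omega) h1

/-! ### counting -/

lemma count_SS {m i : ℕ} (hi : i < m) :
    ((SS m).filter (fun L => i ∈ L)).card = if i = 1 then 0 else 1 := by
  rw [SS, filter_image, card_image_of_injective _ singletonF_inj]
  have h1 : ((range m).erase 1).filter (fun x => i ∈ ({x} : Finset ℕ)) =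
      if i = 1 then ∅ else {i} := by
    split_ifs with h
    · ext x
      simp only [mem_filter, mem_erase, mem_range, mem_singleton, notMem_empty,
        iff_false, not_and]
      rintro ⟨hx1, hxm⟩ rfl
      exact hx1 h
    · ext x
      simp only [mem_filter, mem_erase, mem_range, mem_singleton]
      constructor
      · rintro ⟨⟨hx1, hxm⟩, rfl⟩; rfl
      · rintro rfl; exact ⟨⟨h, hi⟩, rfl⟩
  rw [h1]
  split_ifs <;> simp

lemma count_CC {m i : ℕ} (hm : 30 ≤ m) (hi : i < m) :
    ((CC m).filter (fun L => i ∈ L)).card =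
      if i = 0 ∨ i = m-1 then 1 else 2 := by
  rw [CC, filter_image, card_image_of_injective _ pairF_inj]
  have hmem : ∀ x : ℕ, (i ∈ pairF x) = (i = x ∨ i = x + 1) := by
    intro x
    simp [pairF]
  by_cases h0 : i = 0
  · subst h0
    have h2 : (range (m-1)).filter (fun x => (0:ℕ) ∈ pairF x) = {0} := by
      ext x
      simp only [mem_filter, mem_range, mem_singleton, hmem]
      omega
    rw [h2, if_pos (Or.inl rfl), card_singleton]
  · by_cases h1 : i = m-1
    · have h2 : (range (m-1)).filter (fun x => i ∈ pairF x) = {m-2} := by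
        ext x
        simp only [mem_filter, mem_range, mem_singleton, hmem]
        omega
      rw [h2, if_pos (Or.inr h1), card_singleton]
    · have h2 : (range (m-1)).filter (fun x => i ∈ pairF x) = {i-1, i} := by
        ext x
        simp only [mem_filter, mem_range, mem_insert, mem_singleton, hmem]
        omega
      rw [h2, if_neg (by tauto), card_pair (by omega)]

lemma count_tau {m i : ℕ} :
    (({tauF m} : Finset (Finset ℕ)).filter (fun L => i ∈ L)).card =
      if i ∈ tauF m then 1 else 0 := by
  rw [filter_singleton]
  split_ifs <;> simp

lemma count_P1 {m i : ℕ} (hm3 : m % 3 = 0) (hm : 30 ≤ m) (hi : i < m) :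
    ((P1 m).filter (fun L => i ∈ L)).card = 1 := by
  have hcm : (i ∈ centralF m) = (i = 0 ∨ i = 4 ∨ i = m-4) := by
    simp [centralF]
  have hcons : ∀ a : ℕ, (i ∈ consecF a) = (i = a ∨ i = a+1 ∨ i = a+2) := by
    intro a; simp [consecF]
  have hcentral_notin : centralF m ∉ (runF m).image consecF := by
    rw [mem_image]
    rintro ⟨a, ha, hae⟩
    exact centralF_ne_consecF hm (run_pos hm ha).1 hae.symm
  rw [P1, insert_eq, filter_union,
    card_union_of_disjoint (disjoint_filter_filter (by
      rw [disjoint_singleton_left]; exact hcentral_notin)),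
    filter_singleton, filter_image, card_image_of_injective _ consecF_inj]
  by_cases hcen : i ∈ centralF m
  · rw [if_pos hcen, card_singleton]
    have h2 : (runF m).filter (fun a => i ∈ consecF a) = ∅ := by
      ext a
      simp only [mem_filter, notMem_empty, iff_false, not_and]
      intro ha
      rw [mem_runF hm] at ha
      rw [hcons a]
      rw [hcm] at hcen
      omega
    rw [h2, card_empty]
  · rw [if_neg hcen, card_empty]
    rw [hcm] at hcen
    push_neg at hcen
    have h2 : (runF m).filter (fun a => i ∈ consecF a) =
        {if i ≤ 3 then 1 else if m - 3 ≤ i then m - 3 else i - ((i+1) % 3)} := by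
      ext b
      simp only [mem_filter, mem_singleton]
      rw [mem_runF hm, hcons b]
      split_ifs <;> omega
    rw [h2, card_singleton]

lemma count_FdF {m d i : ℕ} (hd : 13 ≤ d) (h6 : 6*d < m) (hi : i < m) :
    ((FdF m d).filter (fun L => i ∈ L)).card = 3 := by
  rw [FdF, filter_image, card_image_of_injOn (by
    intro a ha b hb hab
    simp only [coe_filter, Set.mem_setOf_eq, mem_range] at ha hb
    exact triF_inj ha.1 hb.1 (by omega) (by omega) hab)]
  exact triF_cover_card hi (by omega) (by omega)

lemma count_FmodF {m i : ℕ} (hm3 : m % 3 = 0) (hm : 200 ≤ m) (hi : i < m) :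
    ((FmodF m).filter (fun L => i ∈ L)).card = 2 := by
  rw [FmodF, filter_image, card_image_of_injOn (by
    intro a ha b hb hab
    simp only [coe_filter, Set.mem_setOf_eq, mem_filter, mem_range] at ha hb
    exact triF_inj ha.1.1 hb.1.1 (by omega) (by omega) hab)]
  rw [filter_comm, triF_cover hi (by omega) (by omega)]
  set w1 := (i + (m - 13)) % m with hw1
  set w2 := (i + (m - 2*13)) % m with hw2
  have hr1 : w1 % 3 = (i + (m - 13)) % 3 := mod3_mod hm3
  have hr2 : w2 % 3 = (i + (m - 2*13)) % 3 := mod3_mod hm3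
  have hne01 : i ≠ w1 := self_ne_addMod hi (by omega) (by omega)
  have hne02 : i ≠ w2 := self_ne_addMod hi (by omega) (by omega)
  have hne12 : w1 ≠ w2 := by
    intro h
    have := addMod_cancel (show m - 13 < m by omega) (show m - 2*13 < m by omega)
      (hw1 ▸ hw2 ▸ h)
    omega
  rcases (show i % 3 = 0 ∨ i % 3 = 1 ∨ i % 3 = 2 by omega) with h3 | h3 | h3
  · have hfe : ({i, w1, w2} : Finset ℕ).filter (fun x => x % 3 ≠ 2) = {i, w2} := by
      ext x
      simp only [mem_filter, mem_insert, mem_singleton]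
      constructor
      · rintro ⟨rfl | rfl | rfl, hx⟩ <;> omega
      · rintro (rfl | rfl)
        · exact ⟨Or.inl rfl, by omega⟩
        · exact ⟨Or.inr (Or.inr rfl), by omega⟩
    rw [hfe, card_pair hne02]
  · have hfe : ({i, w1, w2} : Finset ℕ).filter (fun x => x % 3 ≠ 2) = {i, w1} := by
      ext x
      simp only [mem_filter, mem_insert, mem_singleton]
      constructor
      · rintro ⟨rfl | rfl | rfl, hx⟩ <;> omega
      · rintro (rfl | rfl)
        · exact ⟨Or.inl rfl, by omega⟩
        · exact ⟨Or.inr (Or.inl rfl), by omega⟩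
    rw [hfe, card_pair hne01]
  · have hfe : ({i, w1, w2} : Finset ℕ).filter (fun x => x % 3 ≠ 2) = {w1, w2} := by
      ext x
      simp only [mem_filter, mem_insert, mem_singleton]
      constructor
      · rintro ⟨rfl | rfl | rfl, hx⟩ <;> omega
      · rintro (rfl | rfl)
        · exact ⟨Or.inr (Or.inl rfl), by omega⟩
        · exact ⟨Or.inr (Or.inr rfl), by omega⟩
    rw [hfe, card_pair hne12]

lemma count_FF {m B i : ℕ} (hB : 6*(14+B) < m) (hi : i < m) :
    ((FF m B).filter (fun L => i ∈ L)).card = 3 * B := by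
  rw [FF, filter_biUnion]
  rw [card_biUnion (by
    intro d hd e he hde
    apply disjoint_filter_filter
    rw [disjoint_left]
    intro L hLd hLe
    rw [mem_FdF] at hLd hLe
    obtain ⟨a, ha, rfl⟩ := hLd
    obtain ⟨b, hb, hLe⟩ := hLe
    rw [Finset.mem_coe, Finset.mem_Ico] at hd he
    rcases Nat.lt_or_ge d e with h | h
    · exact triF_ne_triF ha hb (by omega) h (by omega) hLe
    · exact triF_ne_triF hb ha (by omega) (by omega) (by omega) hLe.symm)]
  have hsum : ∀ d ∈ Finset.Ico 14 (14+B), ((FdF m d).filter (fun L => i ∈ L)).card = 3 := by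
    intro d hd
    rw [Finset.mem_Ico] at hd
    exact count_FdF (by omega) (by omega) hi
  rw [Finset.sum_congr rfl hsum, Finset.sum_const, Nat.card_Ico, smul_eq_mul]
  omega

lemma cardfu {s t : Finset (Finset ℕ)} (p : Finset ℕ → Prop) [DecidablePred p]
    (h : Disjoint s t) :
    ((s ∪ t).filter p).card = (s.filter p).card + (t.filter p).card := by
  rw [filter_union, card_union_of_disjoint (disjoint_filter_filter h)]

lemma count_LL {k m i : ℕ} (hk : 3 ≤ k) (hm3 : m % 3 = 0) (hb : 100*k + 200 ≤ m)
    (hi : i < m) : ((LL k m).filter (fun L => i ∈ L)).card = k := by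
  have hm200 : 200 ≤ m := by omega
  have hm30 : 30 ≤ m := by omega
  set B := (k-3)/3 with hB
  have hBk : 3*B ≤ k := by omega
  have hB6 : 6*(14+B) < m := by omega
  have cS := count_SS (m := m) (i := i) hi
  have cC := count_CC hm30 hi
  have cT := count_tau (m := m) (i := i)
  have cF := count_FF hB6 hi
  have hcard1 : ∀ L ∈ SS m, L.card = 1 := fun L h => card_of_mem_SS h
  have hcard2 : ∀ L ∈ CC m, L.card = 2 := fun L h => card_of_mem_CC h
  have hcard3t : ∀ L ∈ ({tauF m} : Finset (Finset ℕ)), L.card = 3 := by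
    intro L h; rw [mem_singleton] at h; rw [h]; exact card_tauF hm30
  have hcard3P : ∀ L ∈ P1 m, L.card = 3 := fun L h => card_of_mem_P1 hm30 h
  have hcard3F : ∀ L ∈ FmodF m, L.card = 3 := fun L h => card_of_mem_FmodF hm200 h
  have hcard3FF : ∀ L ∈ FF m B, L.card = 3 := fun L h => card_of_mem_FF hB6 h
  have d1 : Disjoint (SS m) (CC m) := disj_of_card hcard1 hcard2 (by omega)
  have d2 : Disjoint (SS m) {tauF m} := disj_of_card hcard1 hcard3t (by omega)
  have d3 : Disjoint (CC m) {tauF m} := disj_of_card hcard2 hcard3t (by omega)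
  have d4 : Disjoint (SS m) (P1 m) := disj_of_card hcard1 hcard3P (by omega)
  have d5 : Disjoint (CC m) (P1 m) := disj_of_card hcard2 hcard3P (by omega)
  have d6 : Disjoint ({tauF m} : Finset (Finset ℕ)) (P1 m) :=
    disjoint_singleton_left.2 (tau_notin_P1 hm30)
  have d7 : Disjoint (SS m) (FmodF m) := disj_of_card hcard1 hcard3F (by omega)
  have d8 : Disjoint (CC m) (FmodF m) := disj_of_card hcard2 hcard3F (by omega)
  have d9 : Disjoint ({tauF m} : Finset (Finset ℕ)) (FmodF m) :=
    disjoint_singleton_left.2 (tau_notin_FmodF hm200)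
  have d10 : Disjoint (SS m) (FF m B) := disj_of_card hcard1 hcard3FF (by omega)
  have d11 : Disjoint (CC m) (FF m B) := disj_of_card hcard2 hcard3FF (by omega)
  have d12 : Disjoint ({tauF m} : Finset (Finset ℕ)) (FF m B) :=
    disjoint_singleton_left.2 (tau_notin_FF hB6)
  have d13 : Disjoint (P1 m) (FF m B) := disj_P1_FF hm200 hB6
  have d14 : Disjoint (FmodF m) (FF m B) := disj_FmodF_FF hm200 hB6
  have htau : (i ∈ tauF m) = (i = 0 ∨ i = 1 ∨ i = m-1) := by simp [tauF]
  have hmod := Nat.div_add_mod (k-3) 3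
  by_cases hr1 : (k-3) % 3 = 1
  · rw [LL, if_pos hr1, if_neg (by omega), union_empty]
    rw [cardfu _ (disjoint_union_left.2 ⟨disjoint_union_left.2
        ⟨disjoint_union_left.2 ⟨d10, d11⟩, d12⟩, d13⟩),
      cardfu _ (disjoint_union_left.2 ⟨disjoint_union_left.2 ⟨d4, d5⟩, d6⟩),
      cardfu _ (disjoint_union_left.2 ⟨d2, d3⟩),
      cardfu _ d1, cS, cC, cT, count_P1 hm3 hm30 hi, cF]
    by_cases hc : i ∈ tauF m
    · rw [if_pos hc]; rw [htau] at hc; split_ifs <;> omega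
    · rw [if_neg hc]; rw [htau] at hc; split_ifs <;> omega
  · by_cases hr2 : (k-3) % 3 = 2
    · rw [LL, if_neg (by omega), if_pos hr2, union_empty]
      rw [cardfu _ (disjoint_union_left.2 ⟨disjoint_union_left.2
          ⟨disjoint_union_left.2 ⟨d10, d11⟩, d12⟩, d14⟩),
        cardfu _ (disjoint_union_left.2 ⟨disjoint_union_left.2 ⟨d7, d8⟩, d9⟩),
        cardfu _ (disjoint_union_left.2 ⟨d2, d3⟩),
        cardfu _ d1, cS, cC, cT, count_FmodF hm3 hm200 hi, cF]
      by_cases hc : i ∈ tauF m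
      · rw [if_pos hc]; rw [htau] at hc; split_ifs <;> omega
      · rw [if_neg hc]; rw [htau] at hc; split_ifs <;> omega
    · rw [LL, if_neg (by omega), if_neg (by omega), union_empty, union_empty]
      rw [cardfu _ (disjoint_union_left.2 ⟨disjoint_union_left.2 ⟨d10, d11⟩, d12⟩),
        cardfu _ (disjoint_union_left.2 ⟨d2, d3⟩),
        cardfu _ d1, cS, cC, cT, cF]
      by_cases hc : i ∈ tauF m
      · rw [if_pos hc]; rw [htau] at hc; split_ifs <;> omega
      · rw [if_neg hc]; rw [htau] at hc; split_ifs <;> omega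

/-! ### basic LL facts -/

lemma singleton_mem_LL {k m x : ℕ} (hx : x < m) (hx1 : x ≠ 1) :
    ({x} : Finset ℕ) ∈ LL k m := by
  rw [mem_LL]; left; rw [mem_SS]; exact ⟨x, hx, hx1, rfl⟩

lemma pair_mem_LL {k m x : ℕ} (hx : x + 1 < m) : pairF x ∈ LL k m := by
  rw [mem_LL]; right; left; rw [mem_CC]; exact ⟨x, hx, rfl⟩

lemma tau_mem_LL {k m : ℕ} : tauF m ∈ LL k m := by
  rw [mem_LL]; right; right; left; rfl

lemma LL_subset {k m : ℕ} (hk : 3 ≤ k) (hm3 : m % 3 = 0) (hb : 100*k + 200 ≤ m) :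
    ∀ L ∈ LL k m, L ⊆ range m := by
  intro L hL
  have hm30 : 30 ≤ m := by omega
  rcases mem_LL.1 hL with h | h | h | ⟨-, h⟩ | ⟨-, h⟩ | h
  · obtain ⟨x, hx, -, rfl⟩ := mem_SS.1 h
    intro y hy; rw [mem_singleton] at hy; subst hy; exact mem_range.2 hx
  · obtain ⟨x, hx, rfl⟩ := mem_CC.1 h
    intro y hy
    simp only [pairF, mem_insert, mem_singleton] at hy
    rw [mem_range]; omega
  · subst h
    intro y hy
    simp only [tauF, mem_insert, mem_singleton] at hy
    rw [mem_range]; omega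
  · rcases mem_P1.1 h with rfl | ⟨a, ha, rfl⟩
    · intro y hy
      simp only [centralF, mem_insert, mem_singleton] at hy
      rw [mem_range]; omega
    · have hrp := run_pos hm30 ha
      intro y hy
      simp only [consecF, mem_insert, mem_singleton] at hy
      rw [mem_range]; omega
  · obtain ⟨i, hi, -, rfl⟩ := mem_FmodF.1 h
    exact triF_subset hi
  · obtain ⟨d, hd1, hd2, i, hi, rfl⟩ := mem_FF.1 h
    exact triF_subset hi

lemma LL_nonempty {k m : ℕ} : ∀ L ∈ LL k m, L.Nonempty := by
  intro L hL
  rcases mem_LL.1 hL with h | h | h | ⟨-, h⟩ | ⟨-, h⟩ | h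
  · obtain ⟨x, -, -, rfl⟩ := mem_SS.1 h
    exact ⟨x, mem_singleton_self x⟩
  · obtain ⟨x, -, rfl⟩ := mem_CC.1 h
    exact ⟨x, by simp [pairF]⟩
  · subst h; exact ⟨0, by simp [tauF]⟩
  · rcases mem_P1.1 h with rfl | ⟨a, -, rfl⟩
    · exact ⟨0, by simp [centralF]⟩
    · exact ⟨a, by simp [consecF]⟩
  · obtain ⟨i, -, -, rfl⟩ := mem_FmodF.1 h
    exact ⟨i, by simp [triF]⟩
  · obtain ⟨d, -, -, i, -, rfl⟩ := mem_FF.1 h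
    exact ⟨i, by simp [triF]⟩

lemma LL_card3 {k m : ℕ} (hk : 3 ≤ k) (hm3 : m % 3 = 0) (hb : 100*k + 200 ≤ m) :
    ∀ L ∈ LL k m, L.card ≤ 3 := by
  intro L hL
  have hm30 : 30 ≤ m := by omega
  have hB6 : 6*(14+(k-3)/3) < m := by omega
  rcases mem_LL.1 hL with h | h | h | ⟨-, h⟩ | ⟨-, h⟩ | h
  · rw [card_of_mem_SS h]; omega
  · rw [card_of_mem_CC h]; omega
  · subst h; rw [card_tauF hm30]
  · rw [card_of_mem_P1 hm30 h]
  · rw [card_of_mem_FmodF (by omega) h]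
  · rw [card_of_mem_FF hB6 h]

lemma LL_sep {k m : ℕ} (hb : 30 ≤ m) :
    ∀ i j, i < m → j < m → i ≠ j →
      ∃ L ∈ LL k m, (i ∈ L ∧ j ∉ L) ∨ (j ∈ L ∧ i ∉ L) := by
  intro i j hi hj hij
  by_cases h1 : i = 1
  · refine ⟨{j}, singleton_mem_LL hj (by omega), Or.inr ⟨mem_singleton_self j, ?_⟩⟩
    rw [mem_singleton]; omega
  · refine ⟨{i}, singleton_mem_LL hi h1, Or.inl ⟨mem_singleton_self i, ?_⟩⟩
    rw [mem_singleton]; omega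

lemma LL_big {k m : ℕ} : m - 1 ≤ (LL k m).card := by
  have h1 : SS m ⊆ LL k m := by
    intro L hL; rw [mem_LL]; tauto
  have h2 : m - 1 ≤ (SS m).card := by
    rw [SS, card_image_of_injective _ singletonF_inj]
    calc m - 1 = (range m).card - 1 := by rw [card_range]
      _ ≤ ((range m).erase 1).card := Finset.pred_card_le_card_erase
  exact le_trans h2 (card_le_card h1)

/-! ### rigidity -/

lemma path_rigid {m : ℕ} (hm : 2 ≤ m) (f : ℕ → ℕ) (hmap : ∀ i, i < m → f i < m)
    (hinj : ∀ i j, i < m → j < m → f i = f j → i = j)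
    (hadj : ∀ x, x + 1 < m → (f (x+1) = f x + 1 ∨ f x = f (x+1) + 1)) :
    (∀ i, i < m → f i = i) ∨ (∀ i, i < m → f i = m - 1 - i) := by
  rcases hadj 0 (by omega) with h01 | h01
  · left
    have key : ∀ x, x < m → f x = f 0 + x := by
      intro x
      induction x using Nat.strong_induction_on with
      | _ x ih =>
        intro hx
        rcases x with _ | x
        · simp
        rcases x with _ | y
        · exact h01
        · show f (y+2) = f 0 + (y+2)
          have hy1 : f (y+1) = f 0 + (y+1) := ih (y+1) (by omega) (by omega)
          have hy : f y = f 0 + y := ih y (by omega) (by omega)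
          have hadj2 := hadj (y+1) (by omega)
          rw [show y+1+1 = y+2 from rfl] at hadj2
          rcases hadj2 with h | h
          · omega
          · exfalso
            have heq : f (y+2) = f y := by omega
            have := hinj _ _ (by omega) (by omega) heq
            omega
    have hfm : f (m-1) = f 0 + (m-1) := key (m-1) (by omega)
    have h0 : f 0 = 0 := by
      have := hmap (m-1) (by omega)
      omega
    intro i hi
    rw [key i hi, h0, Nat.zero_add]
  · right
    have key : ∀ x, x < m → f x + x = f 0 := by
      intro x
      induction x using Nat.strong_induction_on with
      | _ x ih =>
        intro hx
        rcases x with _ | x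
        · simp
        rcases x with _ | y
        · omega
        · show f (y+2) + (y+2) = f 0
          have hy1 : f (y+1) + (y+1) = f 0 := ih (y+1) (by omega) (by omega)
          have hy : f y + y = f 0 := ih y (by omega) (by omega)
          have hadj2 := hadj (y+1) (by omega)
          rw [show y+1+1 = y+2 from rfl] at hadj2
          rcases hadj2 with h | h
          · exfalso
            have heq : f (y+2) = f y := by omega
            have := hinj _ _ (by omega) (by omega) heq
            omega
          · omega
    have hfm : f (m-1) + (m-1) = f 0 := key (m-1) (by omega)
    have h0 : f 0 = m - 1 := by
      have h1 := hmap 0 (by omega)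
      omega
    intro i hi
    have := key i hi
    omega

lemma image_pairF (f : ℕ → ℕ) (x : ℕ) : (pairF x).image f = {f x, f (x+1)} := by
  rw [pairF, image_insert, image_singleton]

lemma one_not_LL {k m : ℕ} (hk : 3 ≤ k) (hm3 : m % 3 = 0) (hb : 100*k + 200 ≤ m) :
    ({1} : Finset ℕ) ∉ LL k m := by
  intro h
  have hm30 : 30 ≤ m := by omega
  have hB6 : 6*(14+(k-3)/3) < m := by omega
  rcases mem_LL.1 h with h' | h' | h' | ⟨-, h'⟩ | ⟨-, h'⟩ | h'
  · obtain ⟨x, -, hx1, he⟩ := mem_SS.1 h'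
    exact hx1 (singletonF_inj he.symm)
  · have hc := card_of_mem_CC h'
    rw [card_singleton] at hc; omega
  · have hc := congrArg Finset.card h'
    rw [card_singleton, card_tauF hm30] at hc; omega
  · have hc := card_of_mem_P1 hm30 h'
    rw [card_singleton] at hc; omega
  · have hc := card_of_mem_FmodF (by omega) h'
    rw [card_singleton] at hc; omega
  · have hc := card_of_mem_FF hB6 h'
    rw [card_singleton] at hc; omega

lemma pair_class {k m : ℕ} (hk : 3 ≤ k) (hm3 : m % 3 = 0) (hb : 100*k + 200 ≤ m) :
    ∀ L ∈ LL k m, L.card = 2 → ∃ x, x + 1 < m ∧ L = pairF x := by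
  intro L hL hc
  have hm30 : 30 ≤ m := by omega
  have hB6 : 6*(14+(k-3)/3) < m := by omega
  rcases mem_LL.1 hL with h' | h' | h' | ⟨-, h'⟩ | ⟨-, h'⟩ | h'
  · rw [card_of_mem_SS h'] at hc; exact absurd hc (by omega)
  · exact mem_CC.1 h'
  · subst h'; rw [card_tauF hm30] at hc; exact absurd hc (by omega)
  · rw [card_of_mem_P1 hm30 h'] at hc; exact absurd hc (by omega)
  · rw [card_of_mem_FmodF (by omega) h'] at hc; exact absurd hc (by omega)
  · rw [card_of_mem_FF hB6 h'] at hc; exact absurd hc (by omega)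

lemma LL_rigid {k m : ℕ} (hk : 3 ≤ k) (hm3 : m % 3 = 0) (hb : 100*k + 200 ≤ m) :
    ∀ f : ℕ → ℕ, (∀ i, i < m → f i < m) →
      (∀ i j, i < m → j < m → f i = f j → i = j) →
      (∀ L ∈ LL k m, L.image f ∈ LL k m) → ∀ i, i < m → f i = i := by
  intro f hmap hinj hpres
  have hm30 : 30 ≤ m := by omega
  have hadj : ∀ x, x + 1 < m → (f (x+1) = f x + 1 ∨ f x = f (x+1) + 1) := by
    intro x hx
    have hL : pairF x ∈ LL k m := pair_mem_LL hx
    have h2 : (pairF x).image f ∈ LL k m := hpres _ hL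
    have hne : f x ≠ f (x+1) := fun h => by
      have := hinj x (x+1) (by omega) (by omega) h; omega
    have hcard : ((pairF x).image f).card = 2 := by
      rw [image_pairF]; exact card_pair hne
    obtain ⟨y, hy, hye⟩ := pair_class hk hm3 hb _ h2 hcard
    rw [image_pairF] at hye
    have m1 : f x ∈ pairF y := by rw [← hye]; simp
    have m2 : f (x+1) ∈ pairF y := by rw [← hye]; simp
    simp only [pairF, mem_insert, mem_singleton] at m1 m2
    omega
  rcases path_rigid (by omega) f hmap hinj hadj with h | h
  · exact h
  · exfalso
    have hL : ({m-2} : Finset ℕ) ∈ LL k m := singleton_mem_LL (by omega) (by omega)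
    have h2 : ({m-2} : Finset ℕ).image f ∈ LL k m := hpres _ hL
    rw [image_singleton, h (m-2) (by omega)] at h2
    have he : m - 1 - (m-2) = 1 := by omega
    rw [he] at h2
    exact one_not_LL hk hm3 hb h2

/-! ### swap gadget -/

def swapF (P Q : Finset ℕ) : Finset ℕ → Finset ℕ :=
  fun L => if L = P then Q else if L = Q then P else L

lemma swapF_P {P Q : Finset ℕ} : swapF P Q P = Q := by
  unfold swapF; rw [if_pos rfl]

lemma swapF_Q {P Q : Finset ℕ} (h : P ≠ Q) : swapF P Q Q = P := by
  unfold swapF; rw [if_neg (fun hh => h hh.symm), if_pos rfl]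

lemma swapF_other {P Q L : Finset ℕ} (h1 : L ≠ P) (h2 : L ≠ Q) : swapF P Q L = L := by
  unfold swapF; rw [if_neg h1, if_neg h2]

lemma swap_works {k m : ℕ} {A : Finset ℕ} {P Q : Finset ℕ}
    (hP : P ∈ LL k m) (hQ : Q ∈ LL k m) (hPQ : P ≠ Q)
    (htr : P ∩ A = Q ∩ A) (hne : (P ∩ A).Nonempty) :
    ∃ (g : Finset ℕ → Finset ℕ) (π : ℕ → ℕ), Function.Involutive π ∧
      (∀ a ∈ A, π a ∈ A) ∧ (∀ L ∈ LL k m, g L ∈ LL k m) ∧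
      (∀ L ∈ LL k m, g (g L) = L) ∧ (∃ L ∈ LL k m, g L ≠ L) ∧
      (∀ L ∈ LL k m, g L ∩ A = (L ∩ A).image π) ∧
      (∀ L ∈ LL k m, L ∩ A = ∅ → g L = L) := by
  refine ⟨swapF P Q, id, fun x => rfl, fun a ha => ha, ?_, ?_, ⟨P, hP, ?_⟩, ?_, ?_⟩
  · intro L hL
    by_cases h1 : L = P
    · rw [h1, swapF_P]; exact hQ
    · by_cases h2 : L = Q
      · rw [h2, swapF_Q hPQ]; exact hP
      · rw [swapF_other h1 h2]; exact hL
  · intro L hL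
    by_cases h1 : L = P
    · rw [h1, swapF_P, swapF_Q hPQ]
    · by_cases h2 : L = Q
      · rw [h2, swapF_Q hPQ, swapF_P]
      · rw [swapF_other h1 h2, swapF_other h1 h2]
  · rw [swapF_P]; exact fun h => hPQ h.symm
  · intro L hL
    rw [image_id]
    by_cases h1 : L = P
    · rw [h1, swapF_P, ← htr]
    · by_cases h2 : L = Q
      · rw [h2, swapF_Q hPQ, htr]
      · rw [swapF_other h1 h2]
  · intro L hL h0
    have h1 : L ≠ P := by
      intro hh; subst hh
      rw [h0] at hne; exact not_nonempty_empty hne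
    have h2 : L ≠ Q := by
      intro hh; subst hh
      rw [htr, h0] at hne; exact not_nonempty_empty hne
    exact swapF_other h1 h2

/-! ### reflection gadget -/

def grefF (m : ℕ) : Finset ℕ → Finset ℕ := fun L =>
  if L = ({m-1} : Finset ℕ) then {0, 1}
  else if L = ({0, 1} : Finset ℕ) then {m-1}
  else L.image (negmF m)

lemma negm_zero {m : ℕ} : negmF m 0 = 0 := by unfold negmF; simp

lemma negm_eq {m x : ℕ} (h1 : 1 ≤ x) (h2 : x < m) : negmF m x = m - x := by
  unfold negmF; split_ifs <;> omega

lemma image_negm_negm (m : ℕ) (L : Finset ℕ) :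
    (L.image (negmF m)).image (negmF m) = L := by
  rw [image_image]
  have h : negmF m ∘ negmF m = id := funext (negm_invol m)
  rw [h, image_id]

lemma gref_eval1 {m : ℕ} : grefF m {m-1} = {0,1} := by
  unfold grefF; rw [if_pos rfl]

lemma gref_eval2 {m : ℕ} (hm : 30 ≤ m) : grefF m {0,1} = {m-1} := by
  unfold grefF
  rw [if_neg (by
    intro hh
    have := congrArg Finset.card hh
    rw [card_pair (by omega), card_singleton] at this
    omega), if_pos rfl]

lemma gref_eval3 {m : ℕ} {L : Finset ℕ} (h1 : L ≠ {m-1}) (h2 : L ≠ ({0,1} : Finset ℕ)) :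
    grefF m L = L.image (negmF m) := by
  unfold grefF; rw [if_neg h1, if_neg h2]

lemma image_negm_pair {m x : ℕ} (h1 : 1 ≤ x) (h2 : x + 1 < m) :
    (pairF x).image (negmF m) = pairF (m-x-1) := by
  rw [pairF, pairF, image_insert, image_singleton,
    negm_eq h1 (by omega), negm_eq (by omega) h2]
  ext y
  simp only [mem_insert, mem_singleton]
  omega

lemma image_negm_tau {m : ℕ} (hm : 30 ≤ m) :
    (tauF m).image (negmF m) = tauF m := by
  rw [tauF, image_insert, image_insert, image_singleton, negm_zero,
    negm_eq (by omega) (by omega), negm_eq (by omega) (by omega)]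
  ext y
  simp only [mem_insert, mem_singleton, tauF]
  omega

lemma image_negm_central {m : ℕ} (hm : 30 ≤ m) :
    (centralF m).image (negmF m) = centralF m := by
  rw [centralF, image_insert, image_insert, image_singleton, negm_zero,
    negm_eq (by omega) (by omega), negm_eq (by omega) (by omega)]
  ext y
  simp only [mem_insert, mem_singleton, centralF]
  omega

lemma image_negm_consec {m a : ℕ} (h1 : 1 ≤ a) (h2 : a + 2 < m) :
    (consecF a).image (negmF m) = consecF (m-a-2) := by
  rw [consecF, consecF, image_insert, image_insert, image_singleton,
    negm_eq h1 (by omega), negm_eq (by omega) (by omega), negm_eq (by omega) h2]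
  ext y
  simp only [mem_insert, mem_singleton]
  omega

lemma image_negm_triF {m d i : ℕ} (hi : i < m) (hd : 0 < d) (h2 : 2*d < m) :
    (triF m d i).image (negmF m) = triF m d ((3*m - (i + 2*d)) % m) := by
  have hm : 0 < m := by omega
  have e0 : negmF m i = (3*m - i) % m := by
    conv_lhs => rw [← Nat.mod_eq_of_lt hi]
    exact negm_mod hm (by omega)
  have e1 : negmF m ((i + d) % m) = (3*m - (i + d)) % m := negm_mod hm (by omega)
  have e2 : negmF m ((i + 2*d) % m) = (3*m - (i + 2*d)) % m := negm_mod hm (by omega)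
  have f1 : ((3*m - (i + 2*d)) % m + d) % m = (3*m - (i + d)) % m := by
    rw [Nat.mod_add_mod, show 3*m - (i + 2*d) + d = 3*m - (i+d) by omega]
  have f2 : ((3*m - (i + 2*d)) % m + 2*d) % m = (3*m - i) % m := by
    rw [Nat.mod_add_mod, show 3*m - (i + 2*d) + 2*d = 3*m - i by omega]
  rw [triF, triF, image_insert, image_insert, image_singleton, e0, e1, e2, f1, f2]
  ext y
  simp only [mem_insert, mem_singleton]
  tauto

lemma gref_mem {k m : ℕ} (hk : 3 ≤ k) (hm3 : m % 3 = 0) (hb : 100*k + 200 ≤ m) :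
    ∀ L ∈ LL k m, grefF m L ∈ LL k m := by
  intro L hL
  have hm30 : 30 ≤ m := by omega
  unfold grefF
  split_ifs with hs1 hs2
  · have he : ({0,1} : Finset ℕ) = pairF 0 := rfl
    rw [he]; exact pair_mem_LL (by omega)
  · exact singleton_mem_LL (by omega) (by omega)
  · rcases mem_LL.1 hL with h | h | h | ⟨hr, h⟩ | ⟨hr, h⟩ | h
    · obtain ⟨x, hx, hx1, rfl⟩ := mem_SS.1 h
      rw [image_singleton]
      by_cases h0 : x = 0
      · subst h0; rw [negm_zero]
        exact singleton_mem_LL (by omega) (by omega)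
      · have hxm1 : x ≠ m - 1 := fun hh => hs1 (by rw [hh])
        rw [negm_eq (by omega) hx]
        exact singleton_mem_LL (by omega) (by omega)
    · obtain ⟨x, hx, rfl⟩ := mem_CC.1 h
      have hx0 : x ≠ 0 := by
        intro h0; subst h0
        exact hs2 rfl
      rw [image_negm_pair (by omega) hx]
      exact pair_mem_LL (by omega)
    · subst h; rw [image_negm_tau hm30]; exact tau_mem_LL
    · rcases mem_P1.1 h with rfl | ⟨a, ha, rfl⟩
      · rw [image_negm_central hm30, mem_LL]
        right; right; right; left
        exact ⟨hr, mem_P1.2 (Or.inl rfl)⟩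
      · have hrp := run_pos hm30 ha
        rw [image_negm_consec (by omega) (by omega), mem_LL]
        right; right; right; left
        refine ⟨hr, mem_P1.2 (Or.inr ⟨m - a - 2, ?_, rfl⟩)⟩
        rw [mem_runF hm30] at ha ⊢
        omega
    · obtain ⟨i, hi, hi3, rfl⟩ := mem_FmodF.1 h
      rw [image_negm_triF hi (by omega) (by omega), mem_LL]
      right; right; right; right; left
      refine ⟨hr, mem_FmodF.2 ⟨(3*m - (i + 2*13)) % m, Nat.mod_lt _ (by omega), ?_, rfl⟩⟩
      rw [mod3_mod hm3]
      omega
    · obtain ⟨d, hd1, hd2, i, hi, rfl⟩ := mem_FF.1 h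
      have hd6 : 6*d < m := by omega
      rw [image_negm_triF hi (by omega) (by omega), mem_LL]
      right; right; right; right; right
      exact mem_FF.2 ⟨d, hd1, hd2, _, Nat.mod_lt _ (by omega), rfl⟩

lemma zero_m1_not_LL {k m : ℕ} (hk : 3 ≤ k) (hm3 : m % 3 = 0) (hb : 100*k + 200 ≤ m) :
    ({0, m-1} : Finset ℕ) ∉ LL k m := by
  intro h
  have hm30 : 30 ≤ m := by omega
  have hcard : ({0, m-1} : Finset ℕ).card = 2 := card_pair (by omega)
  obtain ⟨x, hx, he⟩ := pair_class hk hm3 hb _ h hcard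
  have h0 : (0:ℕ) ∈ pairF x := by rw [← he]; simp
  have h1 : (m-1:ℕ) ∈ pairF x := by rw [← he]; simp
  simp only [pairF, mem_insert, mem_singleton] at h0 h1
  omega

lemma gref_gg {k m : ℕ} (hk : 3 ≤ k) (hm3 : m % 3 = 0) (hb : 100*k + 200 ≤ m) :
    ∀ L ∈ LL k m, grefF m (grefF m L) = L := by
  intro L hL
  have hm30 : 30 ≤ m := by omega
  by_cases hs1 : L = ({m-1} : Finset ℕ)
  · rw [hs1, gref_eval1, gref_eval2 hm30]
  · by_cases hs2 : L = ({0,1} : Finset ℕ)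
    · rw [hs2, gref_eval2 hm30, gref_eval1]
    · rw [gref_eval3 hs1 hs2]
      have himg1 : L.image (negmF m) ≠ ({m-1} : Finset ℕ) := by
        intro hh
        have hL1 : L = ({1} : Finset ℕ) := by
          rw [← image_negm_negm m L, hh, image_singleton, negm_eq (by omega) (by omega)]
          congr 1
          omega
        rw [hL1] at hL
        exact one_not_LL hk hm3 hb hL
      have himg2 : L.image (negmF m) ≠ ({0,1} : Finset ℕ) := by
        intro hh
        have hL1 : L = ({0, m-1} : Finset ℕ) := by
          rw [← image_negm_negm m L, hh, image_insert, image_singleton, negm_zero,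
            negm_eq (by omega) (by omega)]
        rw [hL1] at hL
        exact zero_m1_not_LL hk hm3 hb hL
      rw [gref_eval3 himg1 himg2, image_negm_negm]

lemma inter_image_negm {m : ℕ} (hm : 2 ≤ m) {L : Finset ℕ} (hL : L ⊆ range m) :
    (L.image (negmF m)) ∩ ((range m).erase 0) =
      (L ∩ ((range m).erase 0)).image (negmF m) := by
  ext y
  simp only [mem_inter, mem_image, mem_erase, mem_range]
  constructor
  · rintro ⟨⟨x, hxL, rfl⟩, hy1, hy2⟩
    have hxm : x < m := mem_range.1 (hL hxL)
    have hx0 : x ≠ 0 := by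
      intro h0; subst h0
      rw [negm_zero] at hy1
      exact hy1 rfl
    exact ⟨x, ⟨hxL, hx0, hxm⟩, rfl⟩
  · rintro ⟨x, ⟨hxL, hx0, hxm⟩, rfl⟩
    refine ⟨⟨x, hxL, rfl⟩, ?_, ?_⟩
    · rw [negm_eq (by omega) hxm]; omega
    · rw [negm_eq (by omega) hxm]; omega

lemma gref_trace {k m : ℕ} (hk : 3 ≤ k) (hm3 : m % 3 = 0) (hb : 100*k + 200 ≤ m) :
    ∀ L ∈ LL k m, grefF m L ∩ ((range m).erase 0) =
      (L ∩ ((range m).erase 0)).image (negmF m) := by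
  intro L hL
  have hm30 : 30 ≤ m := by omega
  by_cases hs1 : L = ({m-1} : Finset ℕ)
  · rw [hs1, gref_eval1]
    have hle : ({0,1} : Finset ℕ) ∩ ((range m).erase 0) = {1} := by
      ext y
      simp only [mem_inter, mem_insert, mem_singleton, mem_erase, mem_range]
      omega
    have hri : ({m-1} : Finset ℕ) ∩ ((range m).erase 0) = {m-1} := by
      ext y
      simp only [mem_inter, mem_singleton, mem_erase, mem_range]
      omega
    rw [hle, hri, image_singleton, negm_eq (by omega) (by omega)]
    congr 1
    omega
  · by_cases hs2 : L = ({0,1} : Finset ℕ)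
    · rw [hs2, gref_eval2 hm30]
      have hle : ({m-1} : Finset ℕ) ∩ ((range m).erase 0) = {m-1} := by
        ext y
        simp only [mem_inter, mem_singleton, mem_erase, mem_range]
        omega
      have hri : ({0,1} : Finset ℕ) ∩ ((range m).erase 0) = {1} := by
        ext y
        simp only [mem_inter, mem_insert, mem_singleton, mem_erase, mem_range]
        omega
      rw [hle, hri, image_singleton, negm_eq (by omega) (by omega)]
    · rw [gref_eval3 hs1 hs2]
      exact inter_image_negm (by omega) (LL_subset hk hm3 hb L hL)

lemma gref_fix {k m : ℕ} (hk : 3 ≤ k) (hm3 : m % 3 = 0) (hb : 100*k + 200 ≤ m) :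
    ∀ L ∈ LL k m, L ∩ ((range m).erase 0) = ∅ → grefF m L = L := by
  intro L hL h0
  have hm30 : 30 ≤ m := by omega
  have hsub := LL_subset hk hm3 hb L hL
  have hne := LL_nonempty L hL
  have hL0 : L = {0} := by
    ext y
    simp only [mem_singleton]
    constructor
    · intro hy
      by_contra hy0
      have hym : y < m := mem_range.1 (hsub hy)
      have hmem : y ∈ L ∩ ((range m).erase 0) :=
        mem_inter.2 ⟨hy, mem_erase.2 ⟨hy0, mem_range.2 hym⟩⟩
      rw [h0] at hmem
      exact notMem_empty _ hmem
    · rintro rfl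
      obtain ⟨z, hz⟩ := hne
      have hzm := mem_range.1 (hsub hz)
      by_cases hz0 : z = 0
      · rwa [hz0] at hz
      · exfalso
        have hmem : z ∈ L ∩ ((range m).erase 0) :=
          mem_inter.2 ⟨hz, mem_erase.2 ⟨hz0, mem_range.2 hzm⟩⟩
        rw [h0] at hmem
        exact notMem_empty _ hmem
  rw [hL0, gref_eval3 (by
      intro hh
      have h1 : (0:ℕ) ∈ ({m-1} : Finset ℕ) := by rw [← hh]; exact mem_singleton_self 0
      rw [mem_singleton] at h1
      omega)
    (by
      intro hh
      have := congrArg Finset.card hh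
      rw [card_singleton, card_pair (by omega)] at this
      omega), image_singleton, negm_zero]

lemma gref_works {k m : ℕ} (hk : 3 ≤ k) (hm3 : m % 3 = 0) (hb : 100*k + 200 ≤ m)
    {A : Finset ℕ} (hA : A = (range m).erase 0) :
    ∃ (g : Finset ℕ → Finset ℕ) (π : ℕ → ℕ), Function.Involutive π ∧
      (∀ a ∈ A, π a ∈ A) ∧ (∀ L ∈ LL k m, g L ∈ LL k m) ∧
      (∀ L ∈ LL k m, g (g L) = L) ∧ (∃ L ∈ LL k m, g L ≠ L) ∧
      (∀ L ∈ LL k m, g L ∩ A = (L ∩ A).image π) ∧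
      (∀ L ∈ LL k m, L ∩ A = ∅ → g L = L) := by
  have hm30 : 30 ≤ m := by omega
  subst hA
  refine ⟨grefF m, negmF m, negm_invol m, ?_, gref_mem hk hm3 hb, gref_gg hk hm3 hb,
    ⟨{m-1}, singleton_mem_LL (by omega) (by omega), ?_⟩,
    gref_trace hk hm3 hb, gref_fix hk hm3 hb⟩
  · intro a ha
    rw [mem_erase, mem_range] at ha ⊢
    rw [negm_eq (by omega) (by omega)]
    omega
  · rw [gref_eval1]
    intro hh
    have h1 : (0:ℕ) ∈ ({m-1} : Finset ℕ) := by rw [← hh]; simp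
    rw [mem_singleton] at h1
    omega

lemma LL_sym {k m : ℕ} (hk : 3 ≤ k) (hm3 : m % 3 = 0) (hb : 100*k + 200 ≤ m) :
    ∀ A : Finset ℕ, A ⊆ range m → A.Nonempty → A ≠ range m →
      ∃ (g : Finset ℕ → Finset ℕ) (π : ℕ → ℕ), Function.Involutive π ∧
        (∀ a ∈ A, π a ∈ A) ∧ (∀ L ∈ LL k m, g L ∈ LL k m) ∧
        (∀ L ∈ LL k m, g (g L) = L) ∧ (∃ L ∈ LL k m, g L ≠ L) ∧
        (∀ L ∈ LL k m, g L ∩ A = (L ∩ A).image π) ∧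
        (∀ L ∈ LL k m, L ∩ A = ∅ → g L = L) := by
  intro A hA hAne hAne2
  have hm30 : 30 ≤ m := by omega
  by_cases hW1 : ∃ i ∈ A, i ≠ 1 ∧ i + 1 < m ∧ i + 1 ∉ A
  · obtain ⟨i, hiA, hi1, hi1m, hi1A⟩ := hW1
    have him : i < m := mem_range.1 (hA hiA)
    refine swap_works (singleton_mem_LL him hi1) (pair_mem_LL hi1m) ?_ ?_ ?_
    · intro h
      have := congrArg Finset.card h
      rw [card_singleton, card_pairF] at this
      omega
    · ext y
      simp only [mem_inter, mem_singleton, pairF, mem_insert]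
      constructor
      · rintro ⟨rfl, hy⟩
        exact ⟨Or.inl rfl, hy⟩
      · rintro ⟨rfl | rfl, hy⟩
        · exact ⟨rfl, hy⟩
        · exact absurd hy hi1A
    · exact ⟨i, mem_inter.2 ⟨mem_singleton_self i, hiA⟩⟩
  · by_cases hW2 : ∃ i ∈ A, i ≠ 1 ∧ 1 ≤ i ∧ i - 1 ∉ A
    · obtain ⟨i, hiA, hi1, hige, hi1A⟩ := hW2
      have him : i < m := mem_range.1 (hA hiA)
      refine swap_works (singleton_mem_LL him hi1)
        (pair_mem_LL (x := i-1) (by omega)) ?_ ?_ ?_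
      · intro h
        have := congrArg Finset.card h
        rw [card_singleton, card_pairF] at this
        omega
      · ext y
        simp only [mem_inter, mem_singleton, pairF, mem_insert]
        constructor
        · rintro ⟨rfl, hy⟩
          exact ⟨Or.inr (by omega), hy⟩
        · rintro ⟨rfl | h2, hy⟩
          · exact absurd hy hi1A
          · exact ⟨by omega, hy⟩
      · exact ⟨i, mem_inter.2 ⟨mem_singleton_self i, hiA⟩⟩
    · push_neg at hW1 hW2
      by_cases hbig : ∃ i ∈ A, 2 ≤ i
      · obtain ⟨i, hiA, hi2⟩ := hbig
        have him : i < m := mem_range.1 (hA hiA)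
        have up : ∀ j, i ≤ j → j < m → j ∈ A := by
          intro j hij
          induction j, hij using Nat.le_induction with
          | base => intro _; exact hiA
          | succ n hn ihn =>
            intro hnm
            exact hW1 n (ihn (by omega)) (by omega) (by omega)
        have down : ∀ t, t ≤ i - 2 → (i - t) ∈ A := by
          intro t
          induction t with
          | zero => intro _; simpa using hiA
          | succ t ih =>
            intro ht
            have h1 : i - t ∈ A := ih (by omega)
            have h2 := hW2 (i-t) h1 (by omega) (by omega)
            have he : i - (t+1) = i - t - 1 := by omega
            rwa [he]
        have h2A : 2 ∈ A := by
          have h3 := down (i-2) (by omega)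
          have he : i - (i-2) = 2 := by omega
          rwa [he] at h3
        have h1A : 1 ∈ A := by
          have h3 := hW2 2 h2A (by omega) (by omega)
          simpa using h3
        have h0A : 0 ∉ A := by
          intro h0A
          apply hAne2
          apply Finset.Subset.antisymm hA
          intro j hj
          rw [mem_range] at hj
          rcases Nat.eq_zero_or_pos j with rfl | hjpos
          · exact h0A
          · rcases Nat.lt_or_ge j 2 with hj2 | hj2
            · have hj1 : j = 1 := by omega
              rw [hj1]; exact h1A
            · rcases Nat.lt_or_ge j i with hji | hji
              · have h3 := down (i-j) (by omega)
                have he : i - (i-j) = j := by omega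
                rwa [he] at h3
              · exact up j hji hj
        have hAeq : A = (range m).erase 0 := by
          apply Finset.Subset.antisymm
          · intro a ha
            rw [mem_erase]
            exact ⟨fun h => h0A (h ▸ ha), hA ha⟩
          · intro a ha
            rw [mem_erase, mem_range] at ha
            rcases Nat.lt_or_ge a 2 with ha2 | ha2
            · have ha1 : a = 1 := by omega
              rw [ha1]; exact h1A
            · rcases Nat.lt_or_ge a i with hai | hai
              · have h3 := down (i-a) (by omega)
                have he : i - (i-a) = a := by omega
                rwa [he] at h3
              · exact up a hai ha.2
        exact gref_works hk hm3 hb hAeq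
      · push_neg at hbig
        by_cases h1A : 1 ∈ A
        · by_cases h0A : 0 ∈ A
          · refine swap_works (pair_mem_LL (x := 0) (by omega)) (tau_mem_LL) ?_ ?_ ?_
            · intro h
              have := congrArg Finset.card h
              rw [card_pairF, card_tauF hm30] at this
              omega
            · ext y
              simp only [mem_inter, pairF, tauF, mem_insert, mem_singleton]
              constructor
              · rintro ⟨h, hy⟩
                exact ⟨by omega, hy⟩
              · rintro ⟨h, hy⟩
                have hlt := hbig y hy
                exact ⟨by omega, hy⟩
            · exact ⟨1, mem_inter.2 ⟨by simp [pairF], h1A⟩⟩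
          · refine swap_works (pair_mem_LL (x := 0) (by omega))
              (pair_mem_LL (x := 1) (by omega)) ?_ ?_ ?_
            · intro h
              have h0 : (0:ℕ) ∈ pairF 1 := by rw [← h]; simp [pairF]
              simp [pairF] at h0
            · ext y
              simp only [mem_inter, pairF, mem_insert, mem_singleton]
              constructor
              · rintro ⟨h, hy⟩
                have hlt := hbig y hy
                have hy0 : y ≠ 0 := fun hh => h0A (hh ▸ hy)
                exact ⟨by omega, hy⟩
              · rintro ⟨h, hy⟩
                have hlt := hbig y hy
                have hy0 : y ≠ 0 := fun hh => h0A (hh ▸ hy)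
                exact ⟨by omega, hy⟩
            · exact ⟨1, mem_inter.2 ⟨by simp [pairF], h1A⟩⟩
        · exfalso
          obtain ⟨a, ha⟩ := hAne
          have ha2 := hbig a ha
          have ha1 : a ≠ 1 := fun hh => h1A (hh ▸ ha)
          have ha0 : a = 0 := by omega
          subst ha0
          exact h1A (hW1 0 ha (by omega) (by omega))


theorem build (k N m : ℕ) (𝕃 : Finset (Finset ℕ))
    (hLsub : ∀ L ∈ 𝕃, L ⊆ range m)
    (hLne : ∀ L ∈ 𝕃, L.Nonempty)
    (hL3 : ∀ L ∈ 𝕃, L.card ≤ 3)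
    (hcount : ∀ i, i < m → (𝕃.filter (fun L => i ∈ L)).card = k)
    (hN : N < 𝕃.card)
    (hsep : ∀ i j, i < m → j < m → i ≠ j → ∃ L ∈ 𝕃, (i ∈ L ∧ j ∉ L) ∨ (j ∈ L ∧ i ∉ L))
    (hrigid : ∀ f : ℕ → ℕ, (∀ i, i < m → f i < m) →
      (∀ i j, i < m → j < m → f i = f j → i = j) →
      (∀ L ∈ 𝕃, L.image f ∈ 𝕃) → ∀ i, i < m → f i = i)
    (hsym : ∀ A : Finset ℕ, A ⊆ range m → A.Nonempty → A ≠ range m →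
      ∃ (g : Finset ℕ → Finset ℕ) (π : ℕ → ℕ), Function.Involutive π ∧
        (∀ a ∈ A, π a ∈ A) ∧ (∀ L ∈ 𝕃, g L ∈ 𝕃) ∧ (∀ L ∈ 𝕃, g (g L) = L) ∧
        (∃ L ∈ 𝕃, g L ≠ L) ∧ (∀ L ∈ 𝕃, g L ∩ A = (L ∩ A).image π) ∧
        (∀ L ∈ 𝕃, L ∩ A = ∅ → g L = L)) :
    ∃ (n : ℕ) (M : Finset (Finset (Fin n))),
      N < n ∧ (∀ E ∈ M, E.card = k) ∧
      (∀ v : Fin n, (M.filter (fun E => v ∈ E)).card ≤ 3) ∧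
      (∀ σ : Equiv.Perm (Fin n), IsAuto Finset.univ M σ → σ = 1) ∧
      (∀ (X' : Finset (Fin n)) (M' : Finset (Finset (Fin n))),
        (∀ E ∈ M', E ∈ M ∧ E ⊆ X') → 2 ≤ X'.card →
        ¬(X' = Finset.univ ∧ M' = M) →
        ∃ σ : Equiv.Perm (Fin n), IsAuto X' M' σ ∧ σ ≠ 1) := by
  classical
  refine ⟨𝕃.card, ?_⟩
  set n := 𝕃.card with hn
  have e0 : {L // L ∈ 𝕃} ≃ Fin n := Fintype.equivFinOfCardEq (by simp [Fintype.card_coe, hn])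
  set ℓ : Fin n → Finset ℕ := fun v => (e0.symm v : Finset ℕ) with hℓ
  have ℓmem : ∀ v, ℓ v ∈ 𝕃 := fun v => (e0.symm v).2
  have ℓinj : Function.Injective ℓ := by
    intro a b h
    have := e0.symm.injective (Subtype.ext h)
    exact this
  have ℓsurj : ∀ L ∈ 𝕃, ∃ v, ℓ v = L := by
    intro L hL
    exact ⟨e0 ⟨L, hL⟩, by simp [hℓ]⟩
  set E : ℕ → Finset (Fin n) := fun i => Finset.univ.filter (fun v => i ∈ ℓ v) with hE
  set M : Finset (Finset (Fin n)) := (range m).image E with hM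
  have memE : ∀ (i : ℕ) (v : Fin n), v ∈ E i ↔ i ∈ ℓ v := by
    intro i v; simp [hE]
  have cardE : ∀ i, i < m → (E i).card = k := by
    intro i hi
    have himg : (E i).image ℓ = 𝕃.filter (fun L => i ∈ L) := by
      ext L
      simp only [mem_image, mem_filter]
      constructor
      · rintro ⟨v, hv, rfl⟩
        exact ⟨ℓmem v, (memE i v).1 hv⟩
      · rintro ⟨hL, hiL⟩
        obtain ⟨v, rfl⟩ := ℓsurj L hL
        exact ⟨v, (memE i v).2 hiL, rfl⟩
    have h1 : (E i).card = ((E i).image ℓ).card := (card_image_of_injective _ ℓinj).symm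
    rw [h1, himg]; exact hcount i hi
  have Einj : ∀ i j, i < m → j < m → E i = E j → i = j := by
    intro i j hi hj hij
    by_contra hne
    obtain ⟨L, hL, hcase⟩ := hsep i j hi hj hne
    obtain ⟨v, rfl⟩ := ℓsurj L hL
    rcases hcase with ⟨h1, h2⟩ | ⟨h1, h2⟩
    · have hv : v ∈ E i := (memE i v).2 h1
      rw [hij] at hv
      exact h2 ((memE j v).1 hv)
    · have hv : v ∈ E j := (memE j v).2 h1
      rw [← hij] at hv
      exact h2 ((memE i v).1 hv)
  refine ⟨M, hN, ?_, ?_, ?_, ?_⟩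
  · -- edge sizes
    intro F hF
    obtain ⟨i, hi, rfl⟩ := mem_image.1 hF
    exact cardE i (mem_range.1 hi)
  · -- degrees
    intro v
    have hsub2 : M.filter (fun F => v ∈ F) ⊆ (ℓ v).image E := by
      intro F hF
      rw [mem_filter] at hF
      obtain ⟨i, hi, rfl⟩ := mem_image.1 hF.1
      exact mem_image_of_mem E ((memE i v).1 hF.2)
    calc (M.filter (fun F => v ∈ F)).card ≤ ((ℓ v).image E).card := card_le_card hsub2
      _ ≤ (ℓ v).card := card_image_le
      _ ≤ 3 := hL3 _ (ℓmem v)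
  · -- asymmetry
    intro σ hσ
    have hedges : ∀ F : Finset (Fin n), F ∈ M ↔ F.image σ ∈ M := hσ.2
    have spec : ∀ i, i < m → ∃ j, j < m ∧ E j = (E i).image σ := by
      intro i hi
      have h1 : (E i).image σ ∈ M :=
        (hedges (E i)).1 (mem_image_of_mem E (mem_range.2 hi))
      obtain ⟨j, hj, hje⟩ := mem_image.1 h1
      exact ⟨j, mem_range.1 hj, hje⟩
    set f : ℕ → ℕ := fun i => if h : i < m then (spec i h).choose else i with hf
    have hfspec : ∀ i, (h : i < m) → f i < m ∧ E (f i) = (E i).image σ := by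
      intro i h
      have : f i = (spec i h).choose := by rw [hf]; simp [h]
      rw [this]
      exact ⟨(spec i h).choose_spec.1, (spec i h).choose_spec.2⟩
    have hfmap : ∀ i, i < m → f i < m := fun i h => (hfspec i h).1
    have hfinj : ∀ i j, i < m → j < m → f i = f j → i = j := by
      intro i j hi hj hij
      apply Einj i j hi hj
      apply image_injective σ.injective
      rw [← (hfspec i hi).2, ← (hfspec j hj).2, hij]
    have hfsurj : ∀ j, j < m → ∃ i, i < m ∧ f i = j := by
      have h1 : (range m).image f = range m := by
        apply eq_of_subset_of_card_le
        · intro x hx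
          obtain ⟨i, hi, rfl⟩ := mem_image.1 hx
          exact mem_range.2 (hfmap i (mem_range.1 hi))
        · rw [card_image_of_injOn (fun a ha b hb hab =>
            hfinj a b (mem_range.1 ha) (mem_range.1 hb) hab)]
      intro j hj
      have : j ∈ (range m).image f := by rw [h1]; exact mem_range.2 hj
      obtain ⟨i, hi, hfi⟩ := mem_image.1 this
      exact ⟨i, mem_range.1 hi, hfi⟩
    have hmem2 : ∀ i, i < m → ∀ v : Fin n, v ∈ E i ↔ σ v ∈ E (f i) := by
      intro i hi v
      rw [(hfspec i hi).2]
      constructor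
      · exact fun h => mem_image_of_mem _ h
      · intro h
        obtain ⟨u, hu, huv⟩ := mem_image.1 h
        rwa [← σ.injective huv]
    have hkey : ∀ v, ℓ (σ v) = (ℓ v).image f := by
      intro v
      ext j
      constructor
      · intro hj
        have hjm : j < m := mem_range.1 (hLsub _ (ℓmem (σ v)) hj)
        obtain ⟨i, him, rfl⟩ := hfsurj j hjm
        have h2 : σ v ∈ E (f i) := (memE _ _).2 hj
        have h3 : v ∈ E i := (hmem2 i him v).2 h2
        exact mem_image_of_mem f ((memE i v).1 h3)
      · intro hj
        obtain ⟨i, hi, rfl⟩ := mem_image.1 hj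
        have him : i < m := mem_range.1 (hLsub _ (ℓmem v) hi)
        have h3 : v ∈ E i := (memE i v).2 hi
        exact (memE _ _).1 ((hmem2 i him v).1 h3)
    have hfid : ∀ i, i < m → f i = i := by
      apply hrigid f hfmap hfinj
      intro L hL
      obtain ⟨v, rfl⟩ := ℓsurj L hL
      rw [← hkey v]
      exact ℓmem _
    have hfix : ∀ v, σ v = v := by
      intro v
      apply ℓinj
      rw [hkey v]
      ext j
      simp only [mem_image]
      constructor
      · rintro ⟨i, hi, rfl⟩
        rwa [hfid i (mem_range.1 (hLsub _ (ℓmem v) hi))]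
      · intro hj
        exact ⟨j, hj, hfid j (mem_range.1 (hLsub _ (ℓmem v) hj))⟩
    exact Equiv.ext hfix
  · -- subgraphs
    intro X' M' hM' hX2 hnotall
    set A : Finset ℕ := (range m).filter (fun i => E i ∈ M') with hA
    have hAsub : A ⊆ range m := filter_subset _ _
    have hM'eq : M' = A.image E := by
      ext F
      constructor
      · intro hF
        have hFM : F ∈ M := (hM' F hF).1
        obtain ⟨i, hi, rfl⟩ := mem_image.1 hFM
        exact mem_image_of_mem E (mem_filter.2 ⟨hi, hF⟩)
      · intro hF
        obtain ⟨i, hi, rfl⟩ := mem_image.1 hF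
        exact (mem_filter.1 hi).2
    by_cases hAem : A = ∅
    · have hM'em : M' = ∅ := by rw [hM'eq, hAem]; simp
      obtain ⟨a, ha, b, hb, hab⟩ := one_lt_card.1 hX2
      refine ⟨Equiv.swap a b, ⟨?_, ?_⟩, ?_⟩
      · intro v hv
        exact Equiv.swap_apply_of_ne_of_ne
          (fun h => hv (h ▸ ha)) (fun h => hv (h ▸ hb))
      · intro F; simp [hM'em]
      · intro h
        have h2 : Equiv.swap a b a = a := by rw [h]; rfl
        rw [Equiv.swap_apply_left] at h2
        exact hab h2.symm
    by_cases hAall : A = range m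
    · exfalso
      apply hnotall
      constructor
      · apply Finset.eq_univ_of_forall
        intro v
        obtain ⟨j, hj⟩ := hLne _ (ℓmem v)
        have hjm : j < m := mem_range.1 (hLsub _ (ℓmem v) hj)
        have hjA : j ∈ A := by rw [hAall]; exact mem_range.2 hjm
        have hEj : E j ∈ M' := (mem_filter.1 hjA).2
        exact (hM' _ hEj).2 ((memE j v).2 hj)
      · apply Finset.Subset.antisymm
        · intro F hF; exact (hM' F hF).1
        · intro F hF
          obtain ⟨i, hi, rfl⟩ := mem_image.1 hF
          have hiA : i ∈ A := by rw [hAall]; exact hi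
          exact (mem_filter.1 hiA).2
    · obtain ⟨g, π, hπinv, hπA, hg𝕃, hgg, ⟨L0, hL0, hgL0⟩, hgtr, hgfix⟩ :=
        hsym A hAsub (nonempty_iff_ne_empty.2 hAem) hAall
      have hgmem : ∀ v : Fin n, g (ℓ v) ∈ 𝕃 := fun v => hg𝕃 _ (ℓmem v)
      set σfun : Fin n → Fin n := fun v => e0 ⟨g (ℓ v), hgmem v⟩ with hσf
      have hℓσ : ∀ v, ℓ (σfun v) = g (ℓ v) := by
        intro v
        simp [hσf, hℓ]
      have hσσ : ∀ v, σfun (σfun v) = v := by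
        intro v
        apply ℓinj
        rw [hℓσ, hℓσ, hgg _ (ℓmem v)]
      set σ : Equiv.Perm (Fin n) := ⟨σfun, σfun, hσσ, hσσ⟩ with hσdef
      have hσap : ∀ v, σ v = σfun v := fun v => rfl
      have hℓσ' : ∀ v, ℓ (σ v) = g (ℓ v) := fun v => hℓσ v
      have hfixout : ∀ v, ℓ v ∩ A = ∅ → σ v = v := by
        intro v hv
        apply ℓinj
        rw [hℓσ' v]
        exact hgfix _ (ℓmem v) hv
      have hvin : ∀ (v : Fin n) (i : ℕ), i ∈ ℓ v ∩ A → v ∈ X' := by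
        intro v i hi
        rw [mem_inter] at hi
        have hEi : E i ∈ M' := (mem_filter.1 hi.2).2
        exact (hM' _ hEi).2 ((memE i v).2 hi.1)
      have himgE : ∀ i ∈ A, (E i).image σ = E (π i) := by
        intro i hiA
        have hiA' : π i ∈ A := hπA i hiA
        have hmain : ∀ u : Fin n, u ∈ E i ↔ σ u ∈ E (π i) := by
          intro u
          rw [memE, memE, hℓσ' u]
          have h1 : g (ℓ u) ∩ A = (ℓ u ∩ A).image π := hgtr _ (ℓmem u)
          constructor
          · intro h
            have h2 : π i ∈ g (ℓ u) ∩ A := by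
              rw [h1]; exact mem_image_of_mem π (mem_inter.2 ⟨h, hiA⟩)
            exact (mem_inter.1 h2).1
          · intro h
            have h2 : π i ∈ g (ℓ u) ∩ A := mem_inter.2 ⟨h, hiA'⟩
            rw [h1] at h2
            obtain ⟨j, hj, hji⟩ := mem_image.1 h2
            have hji2 : j = i := hπinv.injective hji
            rw [← hji2]
            exact (mem_inter.1 hj).1
        ext w
        simp only [mem_image]
        constructor
        · rintro ⟨u, hu, rfl⟩
          exact (hmain u).1 hu
        · intro hw
          refine ⟨σ.symm w, ?_, Equiv.apply_symm_apply σ w⟩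
          rw [hmain (σ.symm w), Equiv.apply_symm_apply]
          exact hw
      refine ⟨σ, ⟨?_, ?_⟩, ?_⟩
      · intro v hv
        apply hfixout
        by_contra hne
        obtain ⟨i, hi⟩ := nonempty_iff_ne_empty.2 hne
        exact hv (hvin v i hi)
      · intro F
        constructor
        · intro hF
          rw [hM'eq] at hF ⊢
          obtain ⟨i, hiA, rfl⟩ := mem_image.1 hF
          rw [himgE i hiA]
          exact mem_image_of_mem E (hπA i hiA)
        · intro hF
          rw [hM'eq] at hF ⊢
          obtain ⟨j, hjA, hje⟩ := mem_image.1 hF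
          have h2 : (E (π j)).image σ = E j := by
            rw [himgE (π j) (hπA j hjA), hπinv j]
          have h3 : F = E (π j) := by
            apply image_injective σ.injective
            rw [h2, hje]
          rw [h3]
          exact mem_image_of_mem E (hπA j hjA)
      · intro h
        obtain ⟨v0, rfl⟩ := ℓsurj L0 hL0
        have h2 : σ v0 = v0 := by rw [h]; rfl
        have h3 : ℓ (σ v0) = ℓ v0 := by rw [h2]
        rw [hℓσ' v0] at h3
        exact hgL0 h3

end SMA

/-- For every k ≥ 3 there are arbitrarily large strongly minimal asymmetric
k-uniform hypergraphs in which every vertex has degree at most 3. -/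
theorem stmt_9 (k : ℕ) (hk : 3 ≤ k) (N : ℕ) :
    ∃ (n : ℕ) (M : Finset (Finset (Fin n))),
      N < n ∧ (∀ E ∈ M, E.card = k) ∧
      (∀ v : Fin n, (M.filter (fun E => v ∈ E)).card ≤ 3) ∧
      (∀ σ : Equiv.Perm (Fin n), IsAuto Finset.univ M σ → σ = 1) ∧
      (∀ (X' : Finset (Fin n)) (M' : Finset (Finset (Fin n))),
        (∀ E ∈ M', E ∈ M ∧ E ⊆ X') → 2 ≤ X'.card →
        ¬(X' = Finset.univ ∧ M' = M) →
        ∃ σ : Equiv.Perm (Fin n), IsAuto X' M' σ ∧ σ ≠ 1) := by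
  classical
  set m : ℕ := 3 * (N + 100*k + 100) with hmdef
  have hm3 : m % 3 = 0 := by omega
  have hb : 100*k + 200 ≤ m := by omega
  have hN : N < (SMA.LL k m).card := by
    have h1 := SMA.LL_big (k := k) (m := m)
    omega
  exact SMA.build k N m (SMA.LL k m) (SMA.LL_subset hk hm3 hb) SMA.LL_nonempty
    (SMA.LL_card3 hk hm3 hb) (fun i hi => SMA.count_LL hk hm3 hb hi) hN
    (SMA.LL_sep (by omega)) (SMA.LL_rigid hk hm3 hb) (SMA.LL_sym hk hm3 hb)
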